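/- arXiv:2105.03335 — 2 statements merged into one kernel-verified Lean document; each statement's English description precedes it below -/
import Mathlib

section
/- For finite families {μ_i} and {ν_j} of h-precomplete numberings: ⊕_i μ_i ≤^h ⊕_j ν_j if and only if ⊕_i μ_i ≤ ⊕_j ν_j. -/
/-- Relativized partial recursiveness: `f` is partial recursive in the (total) oracle `O`. -/
inductive RecursiveInFn (O : ℕ → ℕ) : (ℕ →. ℕ) → Prop
  | oracle : RecursiveInFn O O
  | zero : RecursiveInFn O (pure 0)
  | succ : RecursiveInFn O Nat.succ
  | left : RecursiveInFn O ↑fun n : ℕ => n.unpair.1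
  | right : RecursiveInFn O ↑fun n : ℕ => n.unpair.2
  | pair {f g} : RecursiveInFn O f → RecursiveInFn O g →
      RecursiveInFn O fun n => Nat.pair <$> f n <*> g n
  | comp {f g} : RecursiveInFn O f → RecursiveInFn O g → RecursiveInFn O fun n => g n >>= f
  | prec {f g} : RecursiveInFn O f → RecursiveInFn O g → RecursiveInFn O (Nat.unpaired fun a n =>
      n.rec (f a) fun y IH => do let i ← IH; g (Nat.pair a (Nat.pair y i)))
  | rfind {f} : RecursiveInFn O f →
      RecursiveInFn O fun a => Nat.rfind fun n => (fun m => m = 0) <$> f (Nat.pair a n)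

/-- Computable (many-one style) reducibility between numberings. -/
def NumRed {S : Type*} (μ ν : ℕ → S) : Prop :=
  ∃ f : ℕ → ℕ, Computable f ∧ ∀ n, μ n = ν (f n)

/-- Reducibility between numberings via an `O`-computable total function. -/
def NumRedIn {S : Type*} (O : ℕ → ℕ) (μ ν : ℕ → S) : Prop :=
  ∃ f : ℕ → ℕ, RecursiveInFn O ↑f ∧ ∀ n, μ n = ν (f n)

/-- The join `μ ⊕ ν` of two numberings. -/
def NumJoin {S : Type*} (μ ν : ℕ → S) : ℕ → S :=
  fun n => if n % 2 = 0 then μ (n / 2) else ν (n / 2)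

/-- `ν` is `O`-precomplete: every `O`-partial computable function has a total
computable `ν`-totalizer. -/
def Precomplete {S : Type*} (O : ℕ → ℕ) (ν : ℕ → S) : Prop :=
  ∀ ψ : ℕ →. ℕ, RecursiveInFn O ψ →
    ∃ t : ℕ → ℕ, Computable t ∧ ∀ (x : ℕ) (hx : (ψ x).Dom), ν (t x) = ν ((ψ x).get hx)

/-- `ν` is `O`-complete with respect to `a`. -/
def CompleteAt {S : Type*} (O : ℕ → ℕ) (ν : ℕ → S) (a : S) : Prop :=
  ∀ ψ : ℕ →. ℕ, RecursiveInFn O ψ →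
    ∃ t : ℕ → ℕ, Computable t ∧ (∀ (x : ℕ) (hx : (ψ x).Dom), ν (t x) = ν ((ψ x).get hx)) ∧
      ∀ x : ℕ, ¬ (ψ x).Dom → ν (t x) = a

open Classical in
/-- The jump (halting problem) of a partial function `U`, as a 0-1 valued total function. -/
noncomputable def jumpOf (U : ℕ →. ℕ) : ℕ → ℕ :=
  fun x => if (U x).Dom then 1 else 0

open Classical in
/-- The operation `G(μ,ν,h)` defined from a universal `h`-partial computable function `U`:
`G⟨n,x⟩ = ν n` if `U x` diverges and `μ (U x)` if it converges. -/
noncomputable def GOp {S : Type*} (μ ν : ℕ → S) (U : ℕ →. ℕ) : ℕ → S :=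
  fun m =>
    if hd : (U (Nat.unpair m).2).Dom then μ ((U (Nat.unpair m).2).get hd)
    else ν (Nat.unpair m).1

/-- The join of a finite family of numberings: `(⊕_{i<p} μ_i)(x) = μ_{x mod p}(x div p)`. -/
def FinNumJoin {S : Type*} {p : ℕ} (hp : 0 < p) (μ : Fin p → ℕ → S) : ℕ → S :=
  fun x => μ ⟨x % p, Nat.mod_lt x hp⟩ (x / p)

namespace RecHelp

theorem recIn_of_eq {O : ℕ → ℕ} {f g : ℕ →. ℕ} (hf : RecursiveInFn O f) (H : ∀ n, f n = g n) :
    RecursiveInFn O g := (funext H : f = g) ▸ hf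

theorem of_nat_partrec (O : ℕ → ℕ) {f : ℕ →. ℕ} (hf : Nat.Partrec f) : RecursiveInFn O f := by
  induction hf with
  | zero => exact RecursiveInFn.zero
  | succ => exact RecursiveInFn.succ
  | left => exact RecursiveInFn.left
  | right => exact RecursiveInFn.right
  | pair _ _ ihf ihg => exact RecursiveInFn.pair ihf ihg
  | comp _ _ ihf ihg => exact RecursiveInFn.comp ihf ihg
  | prec _ _ ihf ihg => exact RecursiveInFn.prec ihf ihg
  | rfind _ ihf => exact RecursiveInFn.rfind ihf

theorem of_computable (O : ℕ → ℕ) {f : ℕ → ℕ} (hf : Computable f) : RecursiveInFn O ↑f :=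
  of_nat_partrec O (Partrec.nat_iff.1 hf.partrec)

theorem comp_total {O : ℕ → ℕ} {f g : ℕ → ℕ} (hf : RecursiveInFn O ↑f) (hg : RecursiveInFn O ↑g) :
    RecursiveInFn O ↑(fun n => f (g n)) :=
  recIn_of_eq (RecursiveInFn.comp hf hg) (fun n => by simp [PFun.coe_val]; exact Part.bind_some _ _)

theorem pair_total {O : ℕ → ℕ} {f g : ℕ → ℕ} (hf : RecursiveInFn O ↑f) (hg : RecursiveInFn O ↑g) :
    RecursiveInFn O ↑(fun n => Nat.pair (f n) (g n)) :=
  recIn_of_eq (RecursiveInFn.pair hf hg) (fun n => by simp [PFun.coe_val, Seq.seq])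

theorem tot_of_eq {O : ℕ → ℕ} {f g : ℕ → ℕ} (hf : RecursiveInFn O ↑f) (H : ∀ n, f n = g n) :
    RecursiveInFn O ↑g := recIn_of_eq hf (fun n => by rw [PFun.coe_val, PFun.coe_val, H])

/-- Parametrized Ershov fixed point for an `O`-precomplete numbering. -/
theorem diag {S : Type*} {O : ℕ → ℕ} {μ0 : ℕ → S} (hμ : Precomplete O μ0)
    {ψf : ℕ → ℕ} (hψ : RecursiveInFn O ↑ψf) :
    ∃ q : ℕ → ℕ, Computable q ∧ ∀ m, μ0 (q m) = μ0 (ψf (Nat.pair m (q m))) := by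
  classical
  have hΦp : Partrec (fun z : ℕ =>
      ((Denumerable.ofNat Nat.Partrec.Code z.unpair.2).eval z).map
        (fun y => Nat.pair z.unpair.1 y)) := by
    have h1 : Partrec fun z : ℕ =>
        (Denumerable.ofNat Nat.Partrec.Code z.unpair.2).eval z :=
      Nat.Partrec.Code.eval_part.comp
        ((Computable.ofNat _).comp (Computable.snd.comp Computable.unpair)) Computable.id
    exact h1.map
      ((Primrec₂.natPair.comp ((Primrec.fst.comp Primrec.unpair).comp Primrec.fst)
        Primrec.snd).to_comp : Computable₂ fun (z y : ℕ) => Nat.pair z.unpair.1 y)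
  have hθ : RecursiveInFn O fun z =>
      (((Denumerable.ofNat Nat.Partrec.Code z.unpair.2).eval z).map
        (fun y => Nat.pair z.unpair.1 y)) >>= (ψf : ℕ →. ℕ) :=
    RecursiveInFn.comp hψ (of_nat_partrec O (Partrec.nat_iff.1 hΦp))
  obtain ⟨t, htc, ht⟩ := hμ _ hθ
  obtain ⟨c, hc⟩ := Nat.Partrec.Code.exists_code.1 (Partrec.nat_iff.1 htc.partrec)
  refine ⟨fun m => t (Nat.pair m (Encodable.encode c)),
    htc.comp ((Primrec₂.natPair.comp Primrec.id (Primrec.const _)).to_comp), ?_⟩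
  intro m
  set z := Nat.pair m (Encodable.encode c) with hz
  have hθz : (((Denumerable.ofNat Nat.Partrec.Code z.unpair.2).eval z).map
      (fun y => Nat.pair z.unpair.1 y)) >>= (ψf : ℕ →. ℕ)
      = Part.some (ψf (Nat.pair m (t z))) := by
    rw [hz]
    simp only [Nat.unpair_pair, Denumerable.ofNat_encode, hc]
    simp [PFun.coe_val]
    exact Part.bind_some _ _
  have hdom : ((((Denumerable.ofNat Nat.Partrec.Code z.unpair.2).eval z).map
      (fun y => Nat.pair z.unpair.1 y)) >>= (ψf : ℕ →. ℕ)).Dom := by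
    rw [hθz]; trivial
  have hkey := ht z hdom
  have hget : ((((Denumerable.ofNat Nat.Partrec.Code z.unpair.2).eval z).map
      (fun y => Nat.pair z.unpair.1 y)) >>= (ψf : ℕ →. ℕ)).get hdom = ψf (Nat.pair m (t z)) := by
    apply Part.get_eq_of_mem
    rw [hθz]; exact Part.mem_some _
  rw [hget] at hkey
  exact hkey

end RecHelp


namespace RecHelp

theorem join_index {S : Type*} {l : ℕ} (hl : 0 < l) (ν : Fin l → ℕ → S) (x : ℕ) {j : ℕ}
    (hj : j < l) (hmod : x % l = j) : FinNumJoin hl ν x = ν ⟨j, hj⟩ (x / l) := by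
  unfold FinNumJoin
  have hfin : (⟨x % l, Nat.mod_lt x hl⟩ : Fin l) = ⟨j, hj⟩ := Fin.ext hmod
  rw [hfin]

theorem join_mul_add {S : Type*} {l : ℕ} (hl : 0 < l) (ν : Fin l → ℕ → S) (a j : ℕ)
    (hj : j < l) : FinNumJoin hl ν (l * a + j) = ν ⟨j, hj⟩ a := by
  have h1 : (l * a + j) % l = j := by rw [Nat.mul_add_mod]; exact Nat.mod_eq_of_lt hj
  have h2 : (l * a + j) / l = a := by rw [Nat.mul_add_div hl]; simp [Nat.div_eq_of_lt hj]
  rw [join_index hl ν _ hj h1, h2]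

private theorem pu1 : Primrec fun v : ℕ => v.unpair.1 := Primrec.fst.comp Primrec.unpair
private theorem pu2 : Primrec fun v : ℕ => v.unpair.2 := Primrec.snd.comp Primrec.unpair

theorem reduce_single {S : Type*} (h : ℕ → ℕ) {l : ℕ} (hl : 0 < l) (ν : Fin l → ℕ → S)
    (hν : ∀ j, Precomplete h (ν j)) (μ0 : ℕ → S) (hμ0 : Precomplete h μ0) :
    ∀ (k : ℕ) (J : Finset ℕ) (F : ℕ → ℕ), J.card ≤ k → RecursiveInFn h ↑F →
      (∀ n, μ0 n = FinNumJoin hl ν (F n)) → (∀ n, F n % l ∈ J) →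
      ∃ g : ℕ → ℕ, Computable g ∧ ∀ n, μ0 n = FinNumJoin hl ν (g n) := by
  intro k
  induction k with
  | zero =>
    intro J F hcard hF hred hmem
    have hJ : J = ∅ := Finset.card_eq_zero.1 (Nat.le_zero.1 hcard)
    exact absurd (hmem 0) (by simp [hJ])
  | succ k ih =>
    intro J F hcard hF hred hmem
    have hj : F 0 % l < l := Nat.mod_lt _ hl
    set j := F 0 % l with hjdef
    have houter : Computable fun v : ℕ =>
        if v.unpair.1 % l = j then v.unpair.2.unpair.1 else v.unpair.2.unpair.2 :=
      (Primrec.ite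
        (PrimrecRel.comp Primrec.eq (Primrec.nat_mod.comp pu1 (Primrec.const l))
          (Primrec.const j))
        (pu1.comp pu2) (pu2.comp pu2)).to_comp
    have hψ : RecursiveInFn h ↑(fun w : ℕ =>
        if F w.unpair.2 % l = j then w.unpair.1.unpair.1 else w.unpair.1.unpair.2) := by
      have hinner : RecursiveInFn h ↑(fun w : ℕ => Nat.pair (F w.unpair.2) w.unpair.1) :=
        pair_total (comp_total hF (of_computable h pu2.to_comp)) (of_computable h pu1.to_comp)
      exact tot_of_eq (comp_total (of_computable h houter) hinner) (fun w => by simp)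
    obtain ⟨q, hqc, hq⟩ := diag hμ0 hψ
    have hQ : ∀ a b : ℕ, μ0 (q (Nat.pair a b)) =
        if F (q (Nat.pair a b)) % l = j then μ0 a else μ0 b := by
      intro a b
      have h1 := hq (Nat.pair a b)
      rw [h1]
      simp only [Nat.unpair_pair]
      exact apply_ite μ0 _ _ _
    by_cases hA : ∃ a, ∀ b, F (q (Nat.pair a b)) % l ≠ j
    · obtain ⟨a, ha⟩ := hA
      have hjJ : j ∈ J := hmem 0
      refine ih (J.erase j) (fun b => F (q (Nat.pair a b))) ?_ ?_ ?_ ?_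
      · have := Finset.card_erase_lt_of_mem hjJ
        omega
      · exact comp_total hF (of_computable h (hqc.comp
          ((Primrec₂.natPair.comp (Primrec.const a) Primrec.id).to_comp)))
      · intro b
        have h1 := hQ a b
        rw [if_neg (ha b)] at h1
        rw [← h1]
        exact hred _
      · intro b
        exact Finset.mem_erase.2 ⟨ha b, hmem _⟩
    · push_neg at hA
      set P : ℕ → ℕ := fun w => if F (q w) % l = j then 0 else 1 with hPdef
      have hPrec : RecursiveInFn h ↑P := by
        have houter2 : Computable fun v : ℕ => if v % l = j then 0 else 1 :=
          (Primrec.ite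
            (PrimrecRel.comp Primrec.eq (Primrec.nat_mod.comp Primrec.id (Primrec.const l))
              (Primrec.const j))
            (Primrec.const 0) (Primrec.const 1)).to_comp
        exact tot_of_eq (comp_total (of_computable h houter2) (comp_total hF (of_computable h hqc)))
          (fun w => by simp [hPdef])
      set R : ℕ →. ℕ :=
        fun a => Nat.rfind fun n => (fun m => m = 0) <$> (P : ℕ →. ℕ) (Nat.pair a n) with hRdef
      have hR : RecursiveInFn h R := RecursiveInFn.rfind hPrec
      have hRdom : ∀ a, (R a).Dom := by
        intro a
        obtain ⟨b, hb⟩ := hA a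
        rw [hRdef]
        apply Nat.rfind_dom.2
        refine ⟨b, ?_, ?_⟩
        · simp [PFun.coe_val, hPdef, hb]
        · intro m _
          simp [PFun.coe_val]
      have hkf : ∀ a, F (q (Nat.pair a ((R a).get (hRdom a)))) % l = j := by
        intro a
        have hmem' : (R a).get (hRdom a) ∈ R a := Part.get_mem _
        have hsp := Nat.rfind_spec hmem'
        by_contra hcon
        simp [PFun.coe_val, hPdef, hcon] at hsp
      have hrrRec : RecursiveInFn h ↑(fun a => F (q (Nat.pair a ((R a).get (hRdom a)))) / l) := by
        have hV : RecursiveInFn h ↑(fun w : ℕ => F (q w) / l) := by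
          have houter3 : Computable fun v : ℕ => v / l :=
            (Primrec.nat_div.comp Primrec.id (Primrec.const l)).to_comp
          exact tot_of_eq (comp_total (of_computable h houter3)
            (comp_total hF (of_computable h hqc))) (fun w => rfl)
        have hpairR : RecursiveInFn h fun a =>
            Nat.pair <$> (↑(fun n : ℕ => n) : ℕ →. ℕ) a <*> R a :=
          RecursiveInFn.pair (of_computable h Computable.id) hR
        apply recIn_of_eq (RecursiveInFn.comp hV hpairR)
        intro a
        apply Part.eq_some_iff.2
        refine Part.mem_bind_iff.2 ⟨Nat.pair a ((R a).get (hRdom a)), ?_, ?_⟩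
        · have h7 : (Nat.pair <$> (↑(fun n : ℕ => n) : ℕ →. ℕ) a <*> R a)
              = (R a).map (Nat.pair a) := by
            simp [PFun.coe_val, Seq.seq]
          rw [h7]
          exact Part.mem_map _ (Part.get_mem _)
        · exact Part.mem_some_iff.2 rfl
      obtain ⟨t', ht'c, ht'⟩ := hν ⟨j, hj⟩ _ hrrRec
      have ht'' : ∀ a, ν ⟨j, hj⟩ (t' a) = μ0 a := by
        intro a
        have hdom2 : ((↑(fun a => F (q (Nat.pair a ((R a).get (hRdom a)))) / l) : ℕ →. ℕ) a).Dom :=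
          trivial
        have h2 := ht' a hdom2
        have h3 : ((↑(fun a => F (q (Nat.pair a ((R a).get (hRdom a)))) / l) : ℕ →. ℕ) a).get hdom2
            = F (q (Nat.pair a ((R a).get (hRdom a)))) / l := rfl
        rw [h3] at h2
        rw [h2]
        have h4 := hQ a ((R a).get (hRdom a))
        rw [if_pos (hkf a)] at h4
        have h5 := hred (q (Nat.pair a ((R a).get (hRdom a))))
        rw [join_index hl ν _ hj (hkf a)] at h5
        rw [← h5, h4]
      refine ⟨fun a => l * t' a + j, ?_, ?_⟩
      · have h6 : Primrec fun v : ℕ => l * v + j :=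
          Primrec.nat_add.comp (Primrec.nat_mul.comp (Primrec.const l) Primrec.id)
            (Primrec.const j)
        exact h6.to_comp.comp ht'c
      · intro a
        rw [join_mul_add hl ν (t' a) j hj]
        exact (ht'' a).symm

end RecHelp


/-- for finite families of `h`-precomplete numberings,
`⊕ᵢ μᵢ ≤^h ⊕ⱼ νⱼ` iff `⊕ᵢ μᵢ ≤ ⊕ⱼ νⱼ`. -/
theorem finJoin_precomplete_redIn_iff_red {S : Type*} (h : ℕ → ℕ) {p l : ℕ}
    (hp : 0 < p) (hl : 0 < l) (μ : Fin p → ℕ → S) (ν : Fin l → ℕ → S)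
    (hμ : ∀ i, Precomplete h (μ i)) (hν : ∀ j, Precomplete h (ν j)) :
    NumRedIn h (FinNumJoin hp μ) (FinNumJoin hl ν) ↔
      NumRed (FinNumJoin hp μ) (FinNumJoin hl ν) := by
  unfold NumRedIn NumRed
  open RecHelp in
  constructor
  · rintro ⟨f, hfRec, hfred⟩
    have Hi : ∀ i : Fin p, ∃ gi : ℕ → ℕ, Computable gi ∧
        ∀ n, μ i n = FinNumJoin hl ν (gi n) := by
      intro i
      have hFi : RecursiveInFn h ↑(fun n => f (p * n + i.val)) := by
        have hlin : Computable fun n : ℕ => p * n + i.val :=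
          (Primrec.nat_add.comp (Primrec.nat_mul.comp (Primrec.const p) Primrec.id)
            (Primrec.const i.val)).to_comp
        exact comp_total hfRec (of_computable h hlin)
      have hredi : ∀ n, μ i n = FinNumJoin hl ν (f (p * n + i.val)) := by
        intro n
        have h1 := hfred (p * n + i.val)
        have h2 : FinNumJoin hp μ (p * n + i.val) = μ i n := by
          rw [join_mul_add hp μ n i.val i.isLt]
        rw [← h2]
        exact h1
      exact reduce_single h hl ν hν (μ i) (hμ i) l (Finset.range l) _
        (by simp) hFi hredi (fun n => Finset.mem_range.2 (Nat.mod_lt _ hl))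
    choose G hGc hGr using Hi
    refine ⟨fun x => (List.ofFn fun i : Fin p => G i (x / p)).getD (x % p) 0, ?_, ?_⟩
    · have hofn : Computable fun x : ℕ => List.ofFn fun i : Fin p => G i (x / p) :=
        Computable.list_ofFn (fun i => (hGc i).comp
          ((Primrec.nat_div.comp Primrec.id (Primrec.const p)).to_comp))
      exact ((Primrec.list_getD 0).to_comp).comp hofn
        ((Primrec.nat_mod.comp Primrec.id (Primrec.const p)).to_comp)
    · intro x
      have hx : x % p < p := Nat.mod_lt x hp
      have hg : (List.ofFn fun i : Fin p => G i (x / p)).getD (x % p) 0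
          = G ⟨x % p, hx⟩ (x / p) := by
        rw [List.getD_eq_getElem?_getD]
        simp [List.getElem?_ofFn, List.ofFnNthVal, hx]
      show FinNumJoin hp μ x
          = FinNumJoin hl ν ((List.ofFn fun i : Fin p => G i (x / p)).getD (x % p) 0)
      rw [hg]
      have h3 : FinNumJoin hp μ x = μ ⟨x % p, Nat.mod_lt x hp⟩ (x / p) := rfl
      rw [h3]
      exact hGr ⟨x % p, hx⟩ (x / p)
  · rintro ⟨g, hgc, hgr⟩
    exact ⟨g, of_computable h hgc, hgr⟩
end

section
/- If ν is an h'-complete numbering (h' the jump of h), then the map μ ↦ G(μ, ν, h) is a closure operator on numberings of S with respect to the preorder ≤^h of h-computable reducibility: it is monotone, μ ≤^h G(μ,ν,h), and G(G(μ,ν,h), ν, h) ≤^h G(μ,ν,h). -/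
namespace RecursiveInFn

theorem of_eq {O : ℕ → ℕ} {f g : ℕ →. ℕ} (hf : RecursiveInFn O f) (H : ∀ n, f n = g n) :
    RecursiveInFn O g := (funext H : f = g) ▸ hf

theorem of_partrec {O : ℕ → ℕ} {f : ℕ →. ℕ} (hf : Nat.Partrec f) : RecursiveInFn O f := by
  induction hf with
  | zero => exact zero
  | succ => exact succ
  | left => exact left
  | right => exact right
  | pair _ _ pf pg => exact pair pf pg
  | comp _ _ pf pg => exact comp pf pg
  | prec _ _ pf pg => exact prec pf pg
  | rfind _ pf => exact rfind pf

theorem of_computable {O : ℕ → ℕ} {f : ℕ → ℕ} (hf : Computable f) : RecursiveInFn O ↑f :=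
  of_partrec (Partrec.nat_iff.mp hf)

theorem trans {O h : ℕ → ℕ} {f : ℕ →. ℕ} (hf : RecursiveInFn h f) (hh : RecursiveInFn O ↑h) :
    RecursiveInFn O f := by
  induction hf with
  | oracle => exact hh
  | zero => exact zero
  | succ => exact succ
  | left => exact left
  | right => exact right
  | pair _ _ pf pg => exact pair pf pg
  | comp _ _ pf pg => exact comp pf pg
  | prec _ _ pf pg => exact prec pf pg
  | rfind _ pf => exact rfind pf

theorem comp_total {O : ℕ → ℕ} {f : ℕ →. ℕ} {g : ℕ → ℕ}
    (hf : RecursiveInFn O f) (hg : RecursiveInFn O ↑g) :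
    RecursiveInFn O fun n => f (g n) :=
  (comp hf hg).of_eq fun n => by simp [PFun.coe_val]; exact Part.bind_some _ _

theorem total_comp {O : ℕ → ℕ} {f g : ℕ → ℕ}
    (hf : RecursiveInFn O ↑f) (hg : RecursiveInFn O ↑g) :
    RecursiveInFn O ↑(fun n => f (g n)) :=
  (comp hf hg).of_eq fun n => by simp [PFun.coe_val]; exact Part.bind_some _ _

private lemma part_bind_self {x : Part ℕ} : (x.bind fun _ => x) = x := by
  ext b
  simp only [Part.mem_bind_iff]
  exact ⟨fun ⟨a, _, hb⟩ => hb, fun hb => ⟨b, hb, hb⟩⟩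

/-- if-zero with total zero branch -/
theorem ifz {O : ℕ → ℕ} {c f : ℕ → ℕ} {g : ℕ →. ℕ}
    (hc : RecursiveInFn O ↑c) (hf : RecursiveInFn O ↑f) (hg : RecursiveInFn O g) :
    RecursiveInFn O (fun m => if c m = 0 then Part.some (f m) else g m) := by
  have hstep : RecursiveInFn O (fun p : ℕ => g p.unpair.1) := comp_total hg left
  have hF := prec hf hstep
  have hpair : RecursiveInFn O ↑(fun m => Nat.pair m (c m)) := by
    have := pair (of_computable (Computable.id (α := ℕ))) hc
    exact this.of_eq fun n => by simp [Seq.seq, PFun.coe_val]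
  have key : ∀ a n, (Nat.unpaired fun a n =>
      n.rec ((f : ℕ →. ℕ) a) fun y IH => do let i ← IH; g (Nat.unpair (Nat.pair a (Nat.pair y i))).1)
      (Nat.pair a n) = if n = 0 then Part.some (f a) else g a := by
    intro a n
    induction n with
    | zero => simp [Nat.unpaired]
    | succ k ih =>
      simp only [Nat.unpaired, Nat.unpair_pair] at ih ⊢
      rw [ih]
      cases k with
      | zero => simp
      | succ k' =>
        simp only [if_neg (Nat.succ_ne_zero k')]
        exact part_bind_self
  have := comp hF hpair
  refine this.of_eq fun m => ?_
  simp only [PFun.coe_val, Part.bind_eq_bind, Part.bind_some]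
  exact key m (c m)

theorem totalizer_eq {S : Type*} {ν : ℕ → S} {t : ℕ → ℕ} {ψ : ℕ →. ℕ}
    (H : ∀ x hx, ν (t x) = ν ((ψ x).get hx)) {m a : ℕ} (hm : ψ m = Part.some a) :
    ν (t m) = ν a := by
  have hx : (ψ m).Dom := by rw [hm]; trivial
  rw [H m hx]
  congr 1
  exact Part.get_eq_iff_eq_some.mpr hm


end RecursiveInFn

/-- if `ν` is `h'`-complete (`h' = jumpOf U` the jump of `h`, `U` the
universal `h`-partial computable function), then `μ ↦ G(μ,ν,h)` is a closure operator
on numberings of `S` with respect to `≤^h`: monotone, increasing, and idempotent-below. -/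
theorem GOp_closureOperator {S : Type*} (h : ℕ → ℕ) (U : ℕ →. ℕ)
    (hU : RecursiveInFn h U)
    (huniv : ∀ ψ : ℕ →. ℕ, RecursiveInFn h ψ → ∃ e : ℕ, ∀ x, ψ x = U (Nat.pair e x))
    (hh : RecursiveInFn (jumpOf U) ↑h)
    (ν : ℕ → S) (hcomp : ∃ s : S, CompleteAt (jumpOf U) ν s) :
    (∀ μ μ₁ : ℕ → S, NumRedIn h μ μ₁ → NumRedIn h (GOp μ ν U) (GOp μ₁ ν U)) ∧
      (∀ μ : ℕ → S, NumRedIn h μ (GOp μ ν U)) ∧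
      (∀ μ : ℕ → S, NumRedIn h (GOp (GOp μ ν U) ν U) (GOp μ ν U)) := by
  obtain ⟨s, hs⟩ := hcomp
  refine ⟨?_, ?_, ?_⟩
  · -- monotone
    rintro μ μ₁ ⟨f, hf, hμ⟩
    have hφ : RecursiveInFn h (fun m => U m.unpair.2 >>= fun v => Part.some (f v)) := by
      have := RecursiveInFn.comp hf (RecursiveInFn.comp hU RecursiveInFn.right)
      refine this.of_eq fun m => ?_
      simp only [PFun.coe_val, Part.bind_eq_bind, Part.bind_some]
      exact congrArg (fun x : Part ℕ => Part.bind x fun v => Part.some (f v)) (Part.bind_some _ U)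
    obtain ⟨e, he⟩ := huniv _ hφ
    refine ⟨fun m => Nat.pair m.unpair.1 (Nat.pair e m), RecursiveInFn.of_computable ?_, fun m => ?_⟩
    · exact (Primrec₂.natPair.comp (Primrec.fst.comp Primrec.unpair)
        ((Primrec₂.natPair.comp (Primrec.const e) Primrec.id))).to_comp
    · have hUe : U (Nat.pair e m) = U m.unpair.2 >>= fun v => Part.some (f v) := (he m).symm
      by_cases hd : (U m.unpair.2).Dom
      · obtain ⟨v, hv⟩ := Part.dom_iff_mem.mp hd
        have h1 : U m.unpair.2 = Part.some v := Part.eq_some_iff.mpr hv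
        rw [h1] at hUe
        simp only [Part.bind_eq_bind, Part.bind_some] at hUe
        simp [GOp, Nat.unpair_pair, h1, hUe, hμ]
      · have h1 : U m.unpair.2 = Part.none := Part.eq_none_iff'.mpr hd
        rw [h1] at hUe
        simp only [Part.bind_eq_bind, Part.bind_none] at hUe
        simp [GOp, Nat.unpair_pair, h1, hUe]
  · -- increasing
    intro μ
    have hid : RecursiveInFn h ↑(id : ℕ → ℕ) := RecursiveInFn.of_computable Computable.id
    obtain ⟨e, he⟩ := huniv _ hid
    refine ⟨fun n => Nat.pair 0 (Nat.pair e n), RecursiveInFn.of_computable ?_, fun n => ?_⟩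
    · exact (Primrec₂.natPair.comp (Primrec.const 0)
        ((Primrec₂.natPair.comp (Primrec.const e) Primrec.id))).to_comp
    · have hUe : U (Nat.pair e n) = Part.some n := (he n).symm
      simp [GOp, Nat.unpair_pair, hUe]
  · -- idempotent-below
    intro μ
    have hU' : RecursiveInFn (jumpOf U) U := hU.trans hh
    have hg1 : RecursiveInFn (jumpOf U)
        (fun m => U m.unpair.2 >>= fun v => Part.some v.unpair.1) := by
      have := RecursiveInFn.comp RecursiveInFn.left (RecursiveInFn.comp hU' RecursiveInFn.right)
      refine this.of_eq fun m => ?_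
      simp only [PFun.coe_val, Part.bind_eq_bind, Part.bind_some]
      exact congrArg (fun x : Part ℕ => Part.bind x fun v => Part.some v.unpair.1) (Part.bind_some _ U)
    have hcJ : RecursiveInFn (jumpOf U) ↑(fun m : ℕ => jumpOf U m.unpair.2) :=
      RecursiveInFn.total_comp RecursiveInFn.oracle RecursiveInFn.right
    set ψ : ℕ →. ℕ := fun m =>
      if jumpOf U m.unpair.2 = 0 then Part.some m.unpair.1
      else U m.unpair.2 >>= fun v => Part.some v.unpair.1 with hψdef
    have hψ : RecursiveInFn (jumpOf U) ψ := RecursiveInFn.ifz hcJ RecursiveInFn.left hg1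
    obtain ⟨t, htc, htdom, -⟩ := hs ψ hψ
    have hφ : RecursiveInFn h (fun m => U m.unpair.2 >>= fun v => U v.unpair.2) := by
      have := RecursiveInFn.comp hU
        (RecursiveInFn.comp RecursiveInFn.right (RecursiveInFn.comp hU RecursiveInFn.right))
      refine this.of_eq fun m => ?_
      simp [PFun.coe_val, Part.bind_assoc]
      show Part.bind (Part.bind (Part.bind (Part.some m.unpair.2) (fun x => U x)) (fun n => Part.some n.unpair.2)) (fun x => U x) = _
      rw [Part.bind_some, Part.bind_assoc]; simp
    obtain ⟨e, he⟩ := huniv _ hφ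
    refine ⟨fun m => Nat.pair (t m) (Nat.pair e m), RecursiveInFn.of_computable ?_, fun m => ?_⟩
    · exact Primrec₂.natPair.to_comp.comp htc
        (((Primrec₂.natPair.comp (Primrec.const e) Primrec.id)).to_comp)
    · have hUe : U (Nat.pair e m) = U m.unpair.2 >>= fun v => U v.unpair.2 := (he m).symm
      by_cases hd : (U m.unpair.2).Dom
      · obtain ⟨v, hv⟩ := Part.dom_iff_mem.mp hd
        have h1 : U m.unpair.2 = Part.some v := Part.eq_some_iff.mpr hv
        rw [h1] at hUe
        simp only [Part.bind_eq_bind, Part.bind_some] at hUe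
        have hJ1 : jumpOf U m.unpair.2 ≠ 0 := by simp [jumpOf, hd]
        by_cases hd2 : (U v.unpair.2).Dom
        · obtain ⟨w, hw⟩ := Part.dom_iff_mem.mp hd2
          have h2 : U v.unpair.2 = Part.some w := Part.eq_some_iff.mpr hw
          rw [h2] at hUe
          simp [GOp, Nat.unpair_pair, h1, h2, hUe]
        · have h2 : U v.unpair.2 = Part.none := Part.eq_none_iff'.mpr hd2
          rw [h2] at hUe
          have hψm : ψ m = Part.some v.unpair.1 := by
            rw [hψdef]
            simp [hJ1, h1]
          have hνt : ν (t m) = ν v.unpair.1 := RecursiveInFn.totalizer_eq htdom hψm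
          simp [GOp, Nat.unpair_pair, h1, h2, hUe, hνt]
      · have h1 : U m.unpair.2 = Part.none := Part.eq_none_iff'.mpr hd
        rw [h1] at hUe
        simp only [Part.bind_eq_bind, Part.bind_none] at hUe
        have hψm : ψ m = Part.some m.unpair.1 := by
          rw [hψdef]
          simp [jumpOf, hd]
        have hνt : ν (t m) = ν m.unpair.1 := RecursiveInFn.totalizer_eq htdom hψm
        simp [GOp, Nat.unpair_pair, h1, hUe, hνt]
end
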